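/- arXiv:1707.05945 — 2 statements merged into one kernel-verified Lean document; each statement's English description precedes it below -/
import Mathlib

section
/- Let u(y₁) = #(y₂,...,y_k).(ψ(y₁,...,y_k) ∧ δ^σ_{G,2r+1}(y₁,...,y_k)) be a unary basic cl-term of radius r and width k (so ψ is an FO[σ]-formula r-local around (y₁,...,y_k) and G ∈ 𝒢_k is connected), and let R := r + (k−1)(2r+1). Then for every σ-structure A and every a₁ ∈ A, the value u^A[a₁] depends only on the R-neighbourhood of a₁; in particular, u^A[a₁] = u^{𝒩_R^A(a₁)}[a₁]. -/
/-- A (finite, relational) signature: a finite set of relation symbols with arities. -/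
structure Signature : Type 1 where
  symbols : Type
  [fin : Finite symbols]
  arity : symbols → ℕ

attribute [instance] Signature.fin

/-- A σ-structure with universe `M` (finiteness/nonemptiness of `M` is imposed where needed):
an interpretation of each relation symbol. -/
structure StrucOn (σ : Signature) (M : Type) : Type where
  rel : ∀ R : σ.symbols, Set (Fin (σ.arity R) → M)

/-- The Gaifman graph of a structure. -/
def StrucOn.gaifman {σ : Signature} {M : Type} (A : StrucOn σ M) : SimpleGraph M where
  Adj a b := a ≠ b ∧ ∃ (R : σ.symbols) (v : Fin (σ.arity R) → M),
      v ∈ A.rel R ∧ (∃ i, v i = a) ∧ (∃ j, v j = b)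
  symm := ⟨by
    rintro a b ⟨hne, R, v, hv, hi, hj⟩
    exact ⟨hne.symm, R, v, hv, hj, hi⟩⟩
  loopless := ⟨by
    rintro a ⟨hne, -⟩
    exact hne rfl⟩

/-- The Gaifman graph restricted to a set `B` (adjacency within `B`);
walks in this graph correspond to walks in the induced substructure on `B`. -/
def StrucOn.gaifmanOn {σ : Signature} {M : Type} (A : StrucOn σ M) (B : Set M) :
    SimpleGraph M where
  Adj a b := a ∈ B ∧ b ∈ B ∧ A.gaifman.Adj a b
  symm := ⟨by rintro a b ⟨ha, hb, h⟩; exact ⟨hb, ha, h.symm⟩⟩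
  loopless := ⟨by rintro a ⟨-, -, h⟩; exact A.gaifman.ne_of_adj h rfl⟩

/-- `dist^A(a,b) ≤ r` (in the Gaifman graph; `False` when `a,b` are not connected). -/
def distLE {σ : Signature} {M : Type} (A : StrucOn σ M) (a b : M) (r : ℕ) : Prop :=
  ∃ w : A.gaifman.Walk a b, w.length ≤ r

/-- distance at most `r` inside the induced substructure on `B`. -/
def distLEIn {σ : Signature} {M : Type} (A : StrucOn σ M) (B : Set M) (a b : M) (r : ℕ) : Prop :=
  ∃ w : (A.gaifmanOn B).Walk a b, w.length ≤ r

/-- the `r`-ball `N_r^A(ā)` of a tuple. -/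
def ballT {σ : Signature} {M : Type} (A : StrucOn σ M) {k : ℕ} (a : Fin k → M) (r : ℕ) :
    Set M := {b | ∃ i, distLE A (a i) b r}

/-! ## First-order formulas (variables are natural numbers) -/

/-- First-order formulas over the signature `σ`; variables are coded by natural numbers. -/
inductive FOForm (σ : Signature) : Type
  | eq : ℕ → ℕ → FOForm σ
  | rel (R : σ.symbols) (v : Fin (σ.arity R) → ℕ) : FOForm σ
  | not : FOForm σ → FOForm σ
  | or : FOForm σ → FOForm σ → FOForm σ
  | ex : ℕ → FOForm σ → FOForm σ

/-- Free variables of a first-order formula. -/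
def FOForm.free {σ : Signature} : FOForm σ → Set ℕ
  | .eq i j => {i, j}
  | .rel _ v => Set.range v
  | .not φ => φ.free
  | .or φ ψ => φ.free ∪ ψ.free
  | .ex x φ => φ.free \ {x}

/-- Satisfaction relativised to a subset `B` of the universe (quantifiers range over `B`);
for assignments into `B` this is satisfaction in the induced substructure `A[B]`. -/
def FOForm.SatIn {σ : Signature} {M : Type} (A : StrucOn σ M) (B : Set M) :
    FOForm σ → (ℕ → M) → Prop
  | .eq i j, β => β i = β j
  | .rel R v, β => (fun k => β (v k)) ∈ A.rel R
  | .not φ, β => ¬ FOForm.SatIn A B φ β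
  | .or φ ψ, β => FOForm.SatIn A B φ β ∨ FOForm.SatIn A B ψ β
  | .ex x φ, β => ∃ a ∈ B, FOForm.SatIn A B φ (Function.update β x a)

/-- Satisfaction `A ⊨ φ[β]`. -/
def FOForm.Sat {σ : Signature} {M : Type} (A : StrucOn σ M) (φ : FOForm σ) (β : ℕ → M) : Prop :=
  φ.SatIn A Set.univ β

/-- Extend a `k`-tuple (interpreting the variables `0,...,k-1`) by a default assignment. -/
def extA {M : Type} {k : ℕ} (a : Fin k → M) (β : ℕ → M) : ℕ → M :=
  fun n => if h : n < k then a ⟨n, h⟩ else β n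

/-- `A ⊨ φ[ā]` for a `k`-tuple `ā` interpreting the variables `0,...,k-1`
(for formulas with free variables among `0,...,k-1` this is independent of the
remaining values of the assignment). -/
def FOForm.SatT {σ : Signature} {M : Type} (A : StrucOn σ M) (φ : FOForm σ) {k : ℕ}
    (a : Fin k → M) : Prop :=
  ∀ β : ℕ → M, φ.Sat A (extA a β)

/-- `A[B] ⊨ φ[ā]`. -/
def FOForm.SatInT {σ : Signature} {M : Type} (A : StrucOn σ M) (B : Set M) (φ : FOForm σ)
    {k : ℕ} (a : Fin k → M) : Prop :=
  ∀ β : ℕ → M, φ.SatIn A B (extA a β)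

/-- `φ` (with free variables among `x̄ = (0,...,k-1)`) is `r`-local around `x̄`:
for every structure `A` and tuple `ā`, `A ⊨ φ[ā]` iff `𝒩_r^A(ā) ⊨ φ[ā]`. -/
def IsLocal (σ : Signature) (r k : ℕ) (φ : FOForm σ) : Prop :=
  φ.free ⊆ {n | n < k} ∧
  ∀ (M : Type) [Finite M] [Nonempty M] (A : StrucOn σ M) (a : Fin k → M),
    φ.SatT A a ↔ φ.SatInT A (ballT A a r) a

/-- The graph `G_{ā,r}` on `[k]` with an edge between `i ≠ j` iff `dist^A(a_i,a_j) ≤ r`. -/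
def tupleGraph {σ : Signature} {M : Type} (A : StrucOn σ M) {k : ℕ} (a : Fin k → M)
    (r : ℕ) : SimpleGraph (Fin k) where
  Adj i j := i ≠ j ∧ distLE A (a i) (a j) r
  symm := ⟨by
    rintro i j ⟨hne, w, hw⟩
    exact ⟨hne.symm, w.reverse, by simpa using hw⟩⟩
  loopless := ⟨by rintro i ⟨hne, -⟩; exact hne rfl⟩

/-! ## Connected local terms (cl-terms) -/

/-- A basic cl-term of radius `r` and width `k`: the data of a *connected* graph
`G ∈ 𝒢_k` and an `FO[σ]`-formula `ψ(y₁,...,y_k)` (variables `0,...,k-1`) that is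
`r`-local around its variables.  It represents the counting term
`#ȳ.(ψ(ȳ) ∧ δ^σ_{G,2r+1}(ȳ))` (ground form) resp. `#(y₂,...,y_k).(ψ ∧ δ^σ_{G,2r+1})`
(unary form). -/
structure BasicCl (σ : Signature) (r k : ℕ) : Type where
  hk : 0 < k
  G : SimpleGraph (Fin k)
  conn : G.Connected
  ψ : FOForm σ
  loc : IsLocal σ r k ψ

/-- The condition `δ^σ_{G,s}(ā)` relativised to `B`: the distance pattern (within `B`)
of the tuple `ā` is exactly `G` (distance ≤ s for edges, > s for non-edges). -/
def deltaCondIn {σ : Signature} {M : Type} (A : StrucOn σ M) (B : Set M) {k : ℕ}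
    (G : SimpleGraph (Fin k)) (s : ℕ) (a : Fin k → M) : Prop :=
  ∀ i j : Fin k, i ≠ j → (G.Adj i j ↔ distLEIn A B (a i) (a j) s)

/-- Value of the ground basic cl-term `#ȳ.(ψ(ȳ) ∧ δ^σ_{G,2r+1}(ȳ))` evaluated in the
induced substructure `A[B]`. -/
noncomputable def BasicCl.gvalIn {σ : Signature} {r k : ℕ} (b : BasicCl σ r k) {M : Type}
    (A : StrucOn σ M) (B : Set M) : ℤ :=
  (Set.ncard {a : Fin k → M | (∀ i, a i ∈ B) ∧ deltaCondIn A B b.G (2 * r + 1) a ∧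
      b.ψ.SatInT A B a} : ℤ)

/-- Value `u^{A[B]}[a₁]` of the unary basic cl-term
`#(y₂,...,y_k).(ψ(ȳ) ∧ δ^σ_{G,2r+1}(ȳ))` at `a₁`, evaluated in `A[B]`. -/
noncomputable def BasicCl.uvalIn {σ : Signature} {r k : ℕ} (b : BasicCl σ r k) {M : Type}
    (A : StrucOn σ M) (B : Set M) (a₁ : M) : ℤ :=
  (Set.ncard {a : Fin k → M | a ⟨0, b.hk⟩ = a₁ ∧ (∀ i, a i ∈ B) ∧
      deltaCondIn A B b.G (2 * r + 1) a ∧ b.ψ.SatInT A B a} : ℤ)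

/-- cl-terms of radius ≤ r and width ≤ k: built from ground and unary basic cl-terms
(of radius ≤ r and width ≤ k) and integers by `+` and `·`.  A unary basic constituent
carries the name `v` of its free variable. -/
inductive ClTerm (σ : Signature) (r k : ℕ) : Type
  | ground {r' k' : ℕ} (hr : r' ≤ r) (hk : k' ≤ k) (b : BasicCl σ r' k') : ClTerm σ r k
  | unary {r' k' : ℕ} (hr : r' ≤ r) (hk : k' ≤ k) (v : ℕ) (b : BasicCl σ r' k') : ClTerm σ r k
  | int : ℤ → ClTerm σ r k
  | add : ClTerm σ r k → ClTerm σ r k → ClTerm σ r k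
  | mul : ClTerm σ r k → ClTerm σ r k → ClTerm σ r k

/-- A cl-term is ground if it contains no unary basic constituent. -/
def ClTerm.IsGround {σ : Signature} {r k : ℕ} : ClTerm σ r k → Prop
  | .ground _ _ _ => True
  | .unary _ _ _ _ => False
  | .int _ => True
  | .add s t => s.IsGround ∧ t.IsGround
  | .mul s t => s.IsGround ∧ t.IsGround

/-- The set of free variables of a cl-term. -/
def ClTerm.freeSet {σ : Signature} {r k : ℕ} : ClTerm σ r k → Set ℕ
  | .ground _ _ _ => ∅
  | .unary _ _ v _ => {v}
  | .int _ => ∅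
  | .add s t => s.freeSet ∪ t.freeSet
  | .mul s t => s.freeSet ∪ t.freeSet

/-- Value of a cl-term in `A[B]` under the assignment `β`. -/
noncomputable def ClTerm.valIn {σ : Signature} {r k : ℕ} {M : Type} (A : StrucOn σ M)
    (B : Set M) (β : ℕ → M) : ClTerm σ r k → ℤ
  | .ground _ _ b => b.gvalIn A B
  | .unary _ _ v b => b.uvalIn A B (β v)
  | .int n => n
  | .add s t => s.valIn A B β + t.valIn A B β
  | .mul s t => s.valIn A B β * t.valIn A B β

/-- Value of a cl-term in `A` under the assignment `β`. -/
noncomputable def ClTerm.val {σ : Signature} {r k : ℕ} {M : Type} (A : StrucOn σ M)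
    (β : ℕ → M) (t : ClTerm σ r k) : ℤ :=
  t.valIn A Set.univ β

/-! ## Auxiliary lemmas for the locality theorem -/

section AuxGraph
variable {σ : Signature} {M : Type} (A : StrucOn σ M)

lemma distLE_mono' {a b : M} {m n : ℕ} (h : distLE A a b m) (hmn : m ≤ n) : distLE A a b n :=
  let ⟨w, hw⟩ := h; ⟨w, hw.trans hmn⟩

lemma distLE_refl' (a : M) (n : ℕ) : distLE A a a n := ⟨.nil, by simp⟩

lemma distLE_symm' {a b : M} {n : ℕ} (h : distLE A a b n) : distLE A b a n :=
  let ⟨w, hw⟩ := h; ⟨w.reverse, by simpa using hw⟩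

lemma distLE_trans' {a b c : M} {m n : ℕ} (h : distLE A a b m) (h' : distLE A b c n) :
    distLE A a c (m + n) := by
  obtain ⟨w, hw⟩ := h; obtain ⟨w', hw'⟩ := h'
  exact ⟨w.append w', by rw [SimpleGraph.Walk.length_append]; omega⟩

lemma gaifmanOn_univ' : A.gaifmanOn Set.univ = A.gaifman := by
  ext a b; simp [StrucOn.gaifmanOn]

lemma distLEIn_univ' {a b : M} {n : ℕ} : distLEIn A Set.univ a b n ↔ distLE A a b n := by
  unfold distLEIn distLE; rw [gaifmanOn_univ']

lemma gaifmanOn_le' (B : Set M) : A.gaifmanOn B ≤ A.gaifman := by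
  rintro a b ⟨-, -, h⟩; exact h

lemma distLEIn_le' {B : Set M} {a b : M} {n : ℕ} (h : distLEIn A B a b n) : distLE A a b n := by
  obtain ⟨w, hw⟩ := h
  exact ⟨w.mapLe (gaifmanOn_le' A B), by simpa using hw⟩

lemma walk_support_split' {u v : M} (w : A.gaifman.Walk u v) {c : M} (hc : c ∈ w.support) :
    ∃ t₁ t₂, t₁ + t₂ = w.length ∧ distLE A u c t₁ ∧ distLE A c v t₂ := by
  classical
  refine ⟨(w.takeUntil c hc).length, (w.dropUntil c hc).length, ?_,
    ⟨w.takeUntil c hc, le_rfl⟩, ⟨w.dropUntil c hc, le_rfl⟩⟩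
  have := w.take_spec hc
  calc (w.takeUntil c hc).length + (w.dropUntil c hc).length
      = ((w.takeUntil c hc).append (w.dropUntil c hc)).length :=
        (SimpleGraph.Walk.length_append _ _).symm
    _ = w.length := by rw [this]

lemma liftOn' {B : Set M} : ∀ {u v : M} (w : A.gaifman.Walk u v),
    (∀ c ∈ w.support, c ∈ B) → ∃ w' : (A.gaifmanOn B).Walk u v, w'.length = w.length := by
  intro u v w
  induction w with
  | nil => exact fun _ => ⟨.nil, rfl⟩
  | @cons u x v h p ih =>
    intro hs
    obtain ⟨p', hp'⟩ := ih (fun c hc => hs c (by simp [hc]))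
    exact ⟨.cons ⟨hs u (by simp), hs x (by simp), h⟩ p', by show p'.length + 1 = p.length + 1; omega⟩

/-- Composition along a walk in `G`: if the images of adjacent indices are at distance
at most `s`, the endpoints are at distance at most `length * s`. -/
lemma distLE_of_walk {k : ℕ} {G : SimpleGraph (Fin k)} {a : Fin k → M} {s : ℕ}
    (hG : ∀ i j, G.Adj i j → distLE A (a i) (a j) s) :
    ∀ {i j : Fin k} (w : G.Walk i j), distLE A (a i) (a j) (w.length * s) := by
  intro i j w
  induction w with
  | nil => exact distLE_refl' A _ _
  | @cons i x j h p ih =>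
    have := distLE_trans' A (hG i x h) ih
    refine distLE_mono' A this (by simp [SimpleGraph.Walk.length_cons]; ring_nf; omega)

/-- All elements of a tuple satisfying the distance condition of a connected graph are
within distance `(k-1)*s` of the first element. -/
lemma tuple_close {k : ℕ} {G : SimpleGraph (Fin k)} (hconn : G.Connected) {a : Fin k → M}
    {s : ℕ} (hG : ∀ i j, G.Adj i j → distLE A (a i) (a j) s) (i₀ i : Fin k) :
    distLE A (a i₀) (a i) ((k - 1) * s) := by
  obtain ⟨w⟩ := hconn i₀ i
  have hp : (w.toPath : G.Walk i₀ i).IsPath := w.toPath.2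
  have hlt : (w.toPath : G.Walk i₀ i).length < k := by
    simpa using hp.length_lt
  have := distLE_of_walk A hG (w.toPath : G.Walk i₀ i)
  exact distLE_mono' A this (Nat.mul_le_mul_right s (by omega))

end AuxGraph

section AuxKey
variable {σ : Signature} {M : Type} (A : StrucOn σ M)

/-- Any walk of length ≤ s between two points stays within distance expansions; hence
distance ≤ s in `A` is equivalent to distance ≤ s within a ball that contains the
`⌊s/2⌋`-fattening of the two endpoints. -/
lemma distLE_iff_distLEIn {B : Set M} {x y : M} {r : ℕ}
    (hx : ∀ c, distLE A x c r → c ∈ B) (hy : ∀ c, distLE A y c r → c ∈ B) :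
    distLE A x y (2 * r + 1) ↔ distLEIn A B x y (2 * r + 1) := by
  constructor
  · rintro ⟨w, hw⟩
    have hs : ∀ c ∈ w.support, c ∈ B := by
      intro c hc
      obtain ⟨t₁, t₂, ht, h₁, h₂⟩ := walk_support_split' A w hc
      rcases le_or_gt t₁ r with h | h
      · exact hx c (distLE_mono' A h₁ h)
      · exact hy c (distLE_mono' A (distLE_symm' A h₂) (by omega))
    obtain ⟨w', hw'⟩ := liftOn' A w hs
    exact ⟨w', by omega⟩
  · exact fun h => distLEIn_le' A h

/-- The induced substructure on `B`. -/
def StrucOn.restrict (B : Set M) : StrucOn σ ↥B :=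
  ⟨fun R => {v | (fun i => (v i : M)) ∈ A.rel R}⟩

lemma restrict_gaifman_le (B : Set M) {x y : ↥B}
    (h : (A.restrict B).gaifman.Adj x y) : A.gaifman.Adj (x : M) (y : M) := by
  obtain ⟨hne, R, v, hv, ⟨i, hi⟩, ⟨j, hj⟩⟩ := h
  exact ⟨fun hh => hne (Subtype.ext hh), R, fun m => (v m : M), hv,
    ⟨i, by simp [hi]⟩, ⟨j, by simp [hj]⟩⟩

/-- Project a walk in the Gaifman graph of the induced substructure to the big structure. -/
lemma restrict_walk_down {B : Set M} {x y : ↥B}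
    (w : (A.restrict B).gaifman.Walk x y) :
    ∃ w' : A.gaifman.Walk (x : M) (y : M), w'.length = w.length := by
  induction w with
  | nil => exact ⟨.nil, rfl⟩
  | @cons u z v h p ih =>
    obtain ⟨p', hp'⟩ := ih
    exact ⟨.cons (restrict_gaifman_le A B h) p', by simp [hp']⟩

/-- Lift a walk whose `r`-reachable set lies in `B` to the induced substructure on `B`. -/
lemma restrict_walk_up {B : Set M} : ∀ {u v : M} (w : A.gaifman.Walk u v) (n : ℕ),
    w.length ≤ n → (∀ c, distLE A u c n → c ∈ B) →
    ∀ (hu : u ∈ B) (hv : v ∈ B),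
      ∃ w' : (A.restrict B).gaifman.Walk ⟨u, hu⟩ ⟨v, hv⟩, w'.length ≤ n := by
  intro u v w
  induction w with
  | nil => exact fun n _ _ hu hv => ⟨.nil, Nat.zero_le n⟩
  | @cons u x v h p ih =>
    intro n hlen hball hu hv
    have hn : 1 ≤ n := le_trans (by simp) hlen
    obtain ⟨hne, R, tup, htup, ⟨i, hi⟩, ⟨j, hj⟩⟩ := h
    -- every entry of the witnessing tuple is within distance 1 of u
    have htupB : ∀ m, tup m ∈ B := by
      intro m
      refine hball (tup m) (distLE_mono' A ?_ hn)
      by_cases hc : tup m = u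
      · rw [hc]; exact distLE_refl' A u 1
      · exact ⟨.cons ⟨fun hh => hc hh.symm, R, tup, htup, ⟨i, hi⟩, ⟨m, rfl⟩⟩ .nil, le_rfl⟩
    have hxB : x ∈ B := by rw [← hj]; exact htupB j
    have hadj : (A.restrict B).gaifman.Adj ⟨u, hu⟩ ⟨x, hxB⟩ := by
      refine ⟨fun hh => hne (congrArg Subtype.val hh), R, fun m => ⟨tup m, htupB m⟩,
        htup, ⟨i, Subtype.ext hi⟩, ⟨j, Subtype.ext hj⟩⟩
    obtain ⟨n', rfl⟩ : ∃ n', n = n' + 1 := ⟨n - 1, by omega⟩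
    have hball' : ∀ c, distLE A x c n' → c ∈ B := by
      intro c hc
      refine hball c ?_
      have : distLE A u x 1 :=
        ⟨.cons ⟨hne, R, tup, htup, ⟨i, hi⟩, ⟨j, hj⟩⟩ .nil, le_rfl⟩
      have := distLE_trans' A this hc
      exact distLE_mono' A this (by omega)
    obtain ⟨p', hp'⟩ := ih n' (by have hl : p.length + 1 ≤ n' + 1 := hlen; omega) hball' hxB hv
    exact ⟨.cons hadj p', by rw [SimpleGraph.Walk.length_cons]; omega⟩

end AuxKey

section AuxFO
variable {σ : Signature} {M : Type} (A : StrucOn σ M)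

/-- Satisfaction only depends on the values of the assignment on free variables. -/
lemma satIn_congr (C : Set M) : ∀ (φ : FOForm σ) {β γ : ℕ → M},
    (∀ n ∈ φ.free, β n = γ n) → (φ.SatIn A C β ↔ φ.SatIn A C γ) := by
  intro φ
  induction φ with
  | eq i j =>
    intro β γ h
    have hi := h i (by simp [FOForm.free]); have hj := h j (by simp [FOForm.free])
    simp [FOForm.SatIn, hi, hj]
  | rel R v =>
    intro β γ h
    have : (fun k => β (v k)) = (fun k => γ (v k)) :=
      funext fun k => h (v k) ⟨k, rfl⟩
    simp [FOForm.SatIn, this]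
  | not φ ih =>
    intro β γ h
    simp only [FOForm.SatIn]
    rw [ih (fun n hn => h n hn)]
  | or φ ψ ihφ ihψ =>
    intro β γ h
    simp only [FOForm.SatIn]
    rw [ihφ (fun n hn => h n (Or.inl hn)), ihψ (fun n hn => h n (Or.inr hn))]
  | ex x φ ih =>
    intro β γ h
    simp only [FOForm.SatIn]
    refine exists_congr fun a => and_congr_right fun _ => ih fun n hn => ?_
    by_cases hx : n = x
    · subst hx; simp [Function.update]
    · simp only [Function.update, dif_neg hx]
      exact h n ⟨hn, hx⟩

/-- `SatInT` agrees with satisfaction under any single default assignment,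
provided the free variables are among the tuple variables. -/
lemma satInT_iff_single (C : Set M) {k : ℕ} {φ : FOForm σ} (hfree : φ.free ⊆ {n | n < k})
    (a : Fin k → M) (β₀ : ℕ → M) :
    FOForm.SatInT A C φ a ↔ φ.SatIn A C (extA a β₀) := by
  constructor
  · exact fun h => h β₀
  · intro h β
    refine (satIn_congr A C φ (γ := extA a β₀) fun n hn => ?_).mpr h
    have : n < k := hfree hn
    simp [extA, this]

lemma coe_update {B : Set M} (β' : ℕ → ↥B) (x : ℕ) (a' : ↥B) :
    (fun n => ((Function.update β' x a' n : ↥B) : M)) =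
      Function.update (fun n => (β' n : M)) x (a' : M) := by
  funext n
  by_cases h : n = x
  · subst h; simp
  · simp [Function.update, h]

/-- Transfer between relativised satisfaction in `A` and in the induced substructure. -/
lemma satIn_restrict {B : Set M} {C : Set M} (hCB : C ⊆ B) :
    ∀ (φ : FOForm σ) (β' : ℕ → ↥B),
      FOForm.SatIn (A.restrict B) (Subtype.val ⁻¹' C) φ β' ↔
        FOForm.SatIn A C φ (fun n => (β' n : M)) := by
  intro φ
  induction φ with
  | eq i j => intro β'; simp [FOForm.SatIn, Subtype.ext_iff]
  | rel R v => intro β'; exact Iff.rfl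
  | not φ ih => intro β'; simp only [FOForm.SatIn]; rw [ih]
  | or φ ψ ihφ ihψ => intro β'; simp only [FOForm.SatIn]; rw [ihφ, ihψ]
  | ex x φ ih =>
    intro β'
    simp only [FOForm.SatIn]
    constructor
    · rintro ⟨a', ha', h⟩
      refine ⟨(a' : M), ha', ?_⟩
      have := (ih (Function.update β' x a')).mp h
      rwa [coe_update] at this
    · rintro ⟨c, hc, h⟩
      refine ⟨⟨c, hCB hc⟩, hc, ?_⟩
      rw [ih (Function.update β' x ⟨c, hCB hc⟩), coe_update]
      exact h

lemma coe_extA {B : Set M} {k : ℕ} (a' : Fin k → ↥B) (β' : ℕ → ↥B) :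
    (fun n => ((extA a' β' n : ↥B) : M)) = extA (fun i => (a' i : M)) (fun n => (β' n : M)) := by
  funext n
  by_cases h : n < k <;> simp [extA, h]

/-- The `r`-ball around the tuple computed in the induced substructure equals the
`r`-ball computed in `A`, provided the latter is contained in `B`. -/
lemma ball_restrict {B : Set M} {k : ℕ} {r : ℕ} (a : Fin k → M) (ha : ∀ i, a i ∈ B)
    (hball : ballT A a r ⊆ B) :
    ballT (A.restrict B) (fun i => (⟨a i, ha i⟩ : ↥B)) r =
      Subtype.val ⁻¹' (ballT A a r) := by
  ext b'
  constructor
  · rintro ⟨i, w', hw'⟩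
    obtain ⟨w, hw⟩ := restrict_walk_down A w'
    exact ⟨i, w, by omega⟩
  · rintro ⟨i, w, hw⟩
    have hcond : ∀ c, distLE A (a i) c r → c ∈ B := fun c hc => hball ⟨i, hc⟩
    obtain ⟨w', hw'⟩ := restrict_walk_up A w r hw hcond (ha i) b'.2
    exact ⟨i, w', hw'⟩

/-- Main transfer: for an `r`-local formula, satisfaction in `A` agrees with satisfaction
in the induced substructure on `B` whenever the `r`-ball of the tuple is inside `B`. -/
lemma sat_local_transfer [Finite M] [Nonempty M] {r k : ℕ} {φ : FOForm σ}
    (hloc : IsLocal σ r k φ) (hk : 0 < k) {B : Set M} (a : Fin k → M)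
    (ha : ∀ i, a i ∈ B) (hball : ballT A a r ⊆ B) :
    φ.SatT A a ↔ φ.SatInT A B a := by
  have : Nonempty ↥B := ⟨⟨a ⟨0, hk⟩, ha _⟩⟩
  set A' := A.restrict B with hA'
  set a' : Fin k → ↥B := fun i => ⟨a i, ha i⟩ with ha'
  have hcoe : (fun i => (a' i : M)) = a := rfl
  set β₀' : ℕ → ↥B := fun _ => ⟨a ⟨0, hk⟩, ha _⟩ with hβ₀'
  set β₀ : ℕ → M := fun n => (β₀' n : M) with hβ₀
  have hfree := hloc.1
  have h1 := hloc.2 M A a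
  have h2 := hloc.2 ↥B A' a'
  have hext : (fun n => ((extA a' β₀' n : ↥B) : M)) = extA a β₀ := by
    rw [coe_extA]
  have hT1 : FOForm.SatIn A' (Subtype.val ⁻¹' (ballT A a r)) φ (extA a' β₀') ↔
      FOForm.SatIn A (ballT A a r) φ (extA a β₀) := by
    rw [satIn_restrict A hball φ (extA a' β₀'), hext]
  have hT2 : FOForm.SatIn A' Set.univ φ (extA a' β₀') ↔
      FOForm.SatIn A B φ (extA a β₀) := by
    have huniv : (Set.univ : Set ↥B) = Subtype.val ⁻¹' B := by
      ext x; simp [x.2]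
    rw [huniv, satIn_restrict A (le_refl B) φ (extA a' β₀'), hext]
  have hBE := ball_restrict A (r := r) a ha hball
  calc φ.SatT A a
      ↔ φ.SatInT A (ballT A a r) a := h1
    _ ↔ FOForm.SatIn A (ballT A a r) φ (extA a β₀) := satInT_iff_single A _ hfree a β₀
    _ ↔ FOForm.SatIn A' (ballT A' a' r) φ (extA a' β₀') := by rw [hA', ha', hBE]; exact hT1.symm
    _ ↔ φ.SatInT A' (ballT A' a' r) a' := (satInT_iff_single A' _ hfree a' β₀').symm
    _ ↔ φ.SatT A' a' := h2.symm
    _ ↔ FOForm.SatIn A' Set.univ φ (extA a' β₀') := satInT_iff_single A' _ hfree a' β₀'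
    _ ↔ FOForm.SatIn A B φ (extA a β₀) := hT2
    _ ↔ φ.SatInT A B a := (satInT_iff_single A _ hfree a β₀).symm

end AuxFO

/-- Remark `rem:radius`: the value `u^A[a₁]` of a unary basic cl-term
`u(y₁) = #(y₂,...,y_k).(ψ ∧ δ^σ_{G,2r+1})` of radius `r` and width `k` can be computed in
the `R`-neighbourhood of `a₁` for `R = r + (k-1)(2r+1)`; in particular
`u^A[a₁] = u^{𝒩_R^A(a₁)}[a₁]`. -/
theorem unary_basic_clTerm_local (σ : Signature) (r k : ℕ) (b : BasicCl σ r k)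
    (M : Type) [Finite M] [Nonempty M] (A : StrucOn σ M) (a₁ : M) :
    b.uvalIn A Set.univ a₁ =
      b.uvalIn A (ballT A ![a₁] (r + (k - 1) * (2 * r + 1))) a₁ := by
  set D : ℕ := (k - 1) * (2 * r + 1) with hD
  set R : ℕ := r + D with hR
  set B : Set M := ballT A ![a₁] R with hB
  have memB : ∀ c : M, c ∈ B ↔ distLE A a₁ c R := by
    intro c
    constructor
    · rintro ⟨i, h⟩
      have : (![a₁] : Fin 1 → M) i = a₁ := by
        have : i = 0 := Subsingleton.elim i 0
        subst this; rfl
      rwa [this] at h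
    · exact fun h => ⟨0, h⟩
  set i₀ : Fin k := ⟨0, b.hk⟩ with hi₀
  unfold BasicCl.uvalIn
  congr 2
  ext a
  simp only [Set.mem_setOf_eq]
  constructor
  · rintro ⟨h0, -, hΔ, hψ⟩
    have hEdge : ∀ i j, b.G.Adj i j → distLE A (a i) (a j) (2 * r + 1) := by
      intro i j h
      exact (distLEIn_univ' A).mp ((hΔ i j h.ne).mp h)
    have hclose : ∀ i, distLE A a₁ (a i) D := by
      intro i
      have := tuple_close A b.conn hEdge i₀ i
      rwa [h0] at this
    have haB : ∀ i, a i ∈ B := fun i =>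
      (memB _).mpr (distLE_mono' A (hclose i) (by omega))
    have hx : ∀ i (c : M), distLE A (a i) c r → c ∈ B := by
      intro i c hc
      exact (memB c).mpr (distLE_mono' A (distLE_trans' A (hclose i) hc) (by omega))
    have hballsub : ballT A a r ⊆ B := by
      rintro c ⟨i, hc⟩
      exact hx i c hc
    refine ⟨h0, haB, ?_, ?_⟩
    · intro i j hij
      rw [hΔ i j hij, distLEIn_univ' A,
        distLE_iff_distLEIn A (hx i) (hx j)]
    · exact (sat_local_transfer A b.loc b.hk a haB hballsub).mp hψ
  · rintro ⟨h0, haB, hΔ, hψ⟩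
    have hEdge : ∀ i j, b.G.Adj i j → distLE A (a i) (a j) (2 * r + 1) := by
      intro i j h
      exact distLEIn_le' A ((hΔ i j h.ne).mp h)
    have hclose : ∀ i, distLE A a₁ (a i) D := by
      intro i
      have := tuple_close A b.conn hEdge i₀ i
      rwa [h0] at this
    have hx : ∀ i (c : M), distLE A (a i) c r → c ∈ B := by
      intro i c hc
      exact (memB c).mpr (distLE_mono' A (distLE_trans' A (hclose i) hc) (by omega))
    have hballsub : ballT A a r ⊆ B := by
      rintro c ⟨i, hc⟩
      exact hx i c hc
    refine ⟨h0, fun i => trivial, ?_, ?_⟩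
    · intro i j hij
      rw [hΔ i j hij, distLEIn_univ' A,
        distLE_iff_distLEIn A (hx i) (hx j)]
    · exact (sat_local_transfer A b.loc b.hk a haB hballsub).mpr hψ
end

section
/- Let ℓ, r > 0 and let G be a finite graph. If Splitter has a winning strategy in the (ℓ,r)-splitter game on G, then Splitter has a winning strategy in the (ℓ,r)-splitter game on every subgraph of G. -/
/-- The graph `G` restricted to the vertex set `s` (viewed as a graph on the ambient
vertex type, with edges only inside `s`). -/
def restrictG {V : Type} (G : SimpleGraph V) (s : Set V) : SimpleGraph V where
  Adj a b := a ∈ s ∧ b ∈ s ∧ G.Adj a b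
  symm := ⟨by rintro a b ⟨ha, hb, h⟩; exact ⟨hb, ha, h.symm⟩⟩
  loopless := ⟨by rintro a ⟨-, -, h⟩; exact G.irrefl h⟩

/-- `N_r^{G[s]}(a)`: the ball of radius `r` around `a` in the subgraph of `G` induced on `s`. -/
def ballIn {V : Type} (G : SimpleGraph V) (s : Set V) (a : V) (r : ℕ) : Set V :=
  {b | b ∈ s ∧ ∃ w : (restrictG G s).Walk a b, w.length ≤ r}

/-- Splitter has a winning strategy in the `(ℓ,r)`-splitter game played on the subgraph of `G`
induced on the vertex set `s`.  In each round Connector picks `a ∈ s`, Splitter answers with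
some `b ∈ N_r(a)`; Splitter wins immediately if `N_r(a) ∖ {b} = ∅`, and otherwise the game
continues on the induced subgraph on `N_r(a) ∖ {b}` with one round less. -/
def SplitterWins {V : Type} (G : SimpleGraph V) (r : ℕ) : ℕ → Set V → Prop
  | 0, _ => False
  | ℓ + 1, s => ∀ a ∈ s, ∃ b ∈ ballIn G s a r,
      (ballIn G s a r \ {b} = ∅) ∨ SplitterWins G r ℓ (ballIn G s a r \ {b})

lemma splitterWins_mono {V' V : Type} (G' : SimpleGraph V') (G : SimpleGraph V) (f : V' → V)
    (hf : Function.Injective f) (r : ℕ) :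
    ∀ ℓ (s : Set V) (t : Set V'), (∀ x ∈ t, f x ∈ s) →
      (∀ x y, (restrictG G' t).Adj x y → (restrictG G s).Adj (f x) (f y)) →
      SplitterWins G r ℓ s → SplitterWins G' r ℓ t
  | 0, _, _, _, _, h => h.elim
  | ℓ + 1, s, t, hsub, hadj, h => by
    intro a ha
    have hball : ∀ x ∈ ballIn G' t a r, f x ∈ ballIn G s (f a) r := by
      rintro x ⟨hx, w, hw⟩
      refine ⟨hsub x hx, w.map ⟨f, fun hxy => hadj _ _ hxy⟩, ?_⟩
      rwa [SimpleGraph.Walk.length_map]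
    obtain ⟨b, hbmem, hbc⟩ := h (f a) (hsub a ha)
    have hex : ∃ b' ∈ ballIn G' t a r, ∀ x ∈ ballIn G' t a r, x ≠ b' → f x ≠ b := by
      by_cases hb' : ∃ x ∈ ballIn G' t a r, f x = b
      · obtain ⟨b', hb'mem, hfb⟩ := hb'
        exact ⟨b', hb'mem, fun x _ hx hfx => hx (hf (hfx.trans hfb.symm))⟩
      · exact ⟨a, ⟨ha, SimpleGraph.Walk.nil, by simp⟩,
          fun x hx _ hfx => hb' ⟨x, hx, hfx⟩⟩
    obtain ⟨b', hb'mem, hne⟩ := hex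
    have hsub' : ∀ x ∈ ballIn G' t a r \ {b'}, f x ∈ ballIn G s (f a) r \ {b} :=
      fun x hx => ⟨hball x hx.1, hne x hx.1 hx.2⟩
    refine ⟨b', hb'mem, ?_⟩
    rcases hbc with hemp | hwin
    · left
      rw [Set.eq_empty_iff_forall_notMem]
      intro x hx
      exact (Set.eq_empty_iff_forall_notMem.1 hemp (f x)) (hsub' x hx)
    · right
      refine splitterWins_mono G' G f hf r ℓ _ _ hsub' ?_ hwin
      rintro x y ⟨hx, hy, hxy⟩
      exact ⟨hsub' x hx, hsub' y hy, (hadj x y ⟨hx.1.1, hy.1.1, hxy⟩).2.2⟩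

/-- if Splitter wins the `(ℓ,r)`-splitter game on a finite graph `G`,
then she wins the `(ℓ,r)`-splitter game on every subgraph of `G`. -/
theorem splitterWins_subgraph (V : Type) [Fintype V] (G : SimpleGraph V) (ℓ r : ℕ)
    (hℓ : 0 < ℓ) (hr : 0 < r)
    (h : SplitterWins G r ℓ (Set.univ : Set V)) (H : G.Subgraph) :
    SplitterWins H.coe r ℓ (Set.univ : Set H.verts) := by
  refine splitterWins_mono H.coe G (Subtype.val) Subtype.val_injective r ℓ
    Set.univ Set.univ (fun x _ => trivial) ?_ h
  rintro x y ⟨-, -, hxy⟩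
  exact ⟨trivial, trivial, H.adj_sub hxy⟩
end
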